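/- Fix a labeling of the infinite rooted ternary tree T_{3,∞} and an integer ℓ ≥ 2. The set Q̃_{ℓ,∞} of all σ ∈ Aut(T_{3,∞}) such that sgn_ℓ(σ,y)·sgn_{ℓ−1}(σ,y) = sgn_ℓ(σ,x_0)·sgn_{ℓ−1}(σ,x_0) for every node y (where x_0 is the root) is a subgroup of Aut(T_{3,∞}). -/

import Mathlib

/-!
Nodes of the infinite rooted `d`-ary tree `T_{d,∞}` are identified with their
labels, i.e. finite words over `Fin d`; the node below `s₁…s_m` is `s₁…s_{m-1}`.
A tree automorphism is a permutation of the nodes preserving levels (word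
length) and the descendant relation (list prefix).
-/

namespace Arboreal

/-- The map induced by `σ` on the labels of the `d^n` nodes lying `n` levels
above the node labeled `y` (junk value if the lengths do not work out, which
cannot happen for a tree automorphism). -/
noncomputable def localMap (d n : ℕ) (σ : Equiv.Perm (List (Fin d)))
    (y : List (Fin d)) (w : List.Vector (Fin d) n) : List.Vector (Fin d) n :=
  if h : ((σ (y ++ w.toList)).drop y.length).length = n then
    ⟨(σ (y ++ w.toList)).drop y.length, h⟩ else w

/-- `sgn d n σ y`: the sign of the permutation of the set `{0,…,d-1}^n` of
labels induced by `σ` on the nodes `n` levels above `y` (by convention `1`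
if this map fails to be a bijection). -/
noncomputable def sgn (d n : ℕ) (σ : Equiv.Perm (List (Fin d)))
    (y : List (Fin d)) : ℤˣ :=
  if h : Function.Bijective (localMap d n σ y) then
    Equiv.Perm.sign (Equiv.ofBijective _ h) else 1

/-- A permutation of the set of nodes of `T_{d,∞}` is a tree automorphism iff
it preserves levels and the descendant (prefix) relation. -/
def IsTreeAut (d : ℕ) (σ : Equiv.Perm (List (Fin d))) : Prop :=
  (∀ w, (σ w).length = w.length) ∧
    ∀ w₁ w₂ : List (Fin d), w₁ <+: w₂ → σ w₁ <+: σ w₂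

variable {d n : ℕ} {σ τ : Equiv.Perm (List (Fin d))}

lemma IsTreeAut.one : IsTreeAut d 1 := ⟨fun _ => rfl, fun _ _ h => h⟩

lemma IsTreeAut.mul (hσ : IsTreeAut d σ) (hτ : IsTreeAut d τ) : IsTreeAut d (σ * τ) :=
  ⟨fun w => by simp [Equiv.Perm.mul_apply, hσ.1, hτ.1],
   fun w₁ w₂ h => hσ.2 _ _ (hτ.2 _ _ h)⟩

lemma IsTreeAut.prefix_iff (hσ : IsTreeAut d σ) {w₁ w₂ : List (Fin d)} :
    σ w₁ <+: σ w₂ ↔ w₁ <+: w₂ := by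
  refine ⟨fun h => ?_, hσ.2 _ _⟩
  have hlenle : w₁.length ≤ w₂.length := by
    have := h.length_le; rwa [hσ.1, hσ.1] at this
  have hp : w₂.take w₁.length <+: w₂ := List.take_prefix _ _
  have h2 : σ (w₂.take w₁.length) <+: σ w₂ := hσ.2 _ _ hp
  have hlen : (σ (w₂.take w₁.length)).length = (σ w₁).length := by
    rw [hσ.1, hσ.1, List.length_take]; omega
  have h3 : σ (w₂.take w₁.length) <+: σ w₁ :=
    List.prefix_of_prefix_length_le h2 h (le_of_eq hlen)
  have heq : w₂.take w₁.length = w₁ := σ.injective (h3.eq_of_length hlen)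
  rw [← heq]; exact hp

lemma IsTreeAut.inv (hσ : IsTreeAut d σ) : IsTreeAut d σ⁻¹ := by
  constructor
  · intro w
    have := hσ.1 (σ⁻¹ w)
    rw [Equiv.Perm.coe_inv, Equiv.apply_symm_apply] at this; exact this.symm
  · intro w₁ w₂ h
    rw [← hσ.prefix_iff]
    simpa using h

lemma IsTreeAut.apply_nil (hσ : IsTreeAut d σ) : σ [] = [] :=
  List.length_eq_zero_iff.mp (hσ.1 [])

lemma IsTreeAut.drop_length (hσ : IsTreeAut d σ) (y l : List (Fin d)) :
    ((σ (y ++ l)).drop y.length).length = l.length := by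
  simp [hσ.1]

lemma IsTreeAut.apply_append (hσ : IsTreeAut d σ) (y l : List (Fin d)) :
    σ (y ++ l) = σ y ++ (σ (y ++ l)).drop y.length := by
  obtain ⟨t, ht⟩ := hσ.2 y (y ++ l) (List.prefix_append y l)
  have hdt : (σ (y ++ l)).drop y.length = t := by
    conv_lhs => rw [← ht]
    have hy := hσ.1 y
    rw [← hy, List.drop_left]
  rw [hdt, ht]

lemma localMap_toList (hσ : IsTreeAut d σ) (y : List (Fin d))
    (w : List.Vector (Fin d) n) :
    (localMap d n σ y w).toList = (σ (y ++ w.toList)).drop y.length := by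
  have h : ((σ (y ++ w.toList)).drop y.length).length = n := by
    rw [hσ.drop_length, w.toList_length]
  rw [localMap]
  exact (dif_pos h).symm ▸ rfl

lemma localMap_mul (hσ : IsTreeAut d σ) (hτ : IsTreeAut d τ) (y : List (Fin d)) :
    localMap d n (σ * τ) y = localMap d n σ (τ y) ∘ localMap d n τ y := by
  funext w
  apply List.Vector.toList_injective
  rw [localMap_toList (hσ.mul hτ), Function.comp_apply, localMap_toList hσ,
    localMap_toList hτ, ← hτ.apply_append, hτ.1]
  simp [Equiv.Perm.mul_apply]

lemma localMap_one (y : List (Fin d)) :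
    localMap d n (1 : Equiv.Perm (List (Fin d))) y = id := by
  funext w
  apply List.Vector.toList_injective
  rw [localMap_toList (IsTreeAut.one) y]
  simp

lemma localMap_bijective (hσ : IsTreeAut d σ) (y : List (Fin d)) :
    Function.Bijective (localMap d n σ y) := by
  have hid : localMap d n σ⁻¹ (σ y) ∘ localMap d n σ y = id := by
    rw [← localMap_mul hσ.inv hσ, inv_mul_cancel, localMap_one]
  have hli : Function.LeftInverse (localMap d n σ⁻¹ (σ y)) (localMap d n σ y) := by
    intro w
    have := congrFun hid w
    simpa using this
  exact Finite.injective_iff_bijective.mp hli.injective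

lemma sgn_one (y : List (Fin d)) :
    sgn d n (1 : Equiv.Perm (List (Fin d))) y = 1 := by
  have h := localMap_bijective (n := n) (IsTreeAut.one (d := d)) y
  rw [sgn, dif_pos h]
  have : Equiv.ofBijective _ h = Equiv.refl _ := by
    ext w; simp [localMap_one]
  rw [this]
  simp

lemma sgn_mul (hσ : IsTreeAut d σ) (hτ : IsTreeAut d τ) (y : List (Fin d)) :
    sgn d n (σ * τ) y = sgn d n σ (τ y) * sgn d n τ y := by
  have h1 := localMap_bijective (n := n) (hσ.mul hτ) y
  have h2 := localMap_bijective (n := n) hσ (τ y)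
  have h3 := localMap_bijective (n := n) hτ y
  rw [sgn, dif_pos h1, sgn, dif_pos h2, sgn, dif_pos h3]
  have : Equiv.ofBijective _ h1 = Equiv.ofBijective _ h2 * Equiv.ofBijective _ h3 := by
    ext w
    simp [localMap_mul hσ hτ]
  rw [this, map_mul]

lemma sgn_inv (hσ : IsTreeAut d σ) (y : List (Fin d)) :
    sgn d n σ⁻¹ y = sgn d n σ (σ⁻¹ y) := by
  have h1 : sgn d n σ (σ⁻¹ y) * sgn d n σ⁻¹ y = 1 := by
    rw [← sgn_mul hσ hσ.inv y, mul_inv_cancel, sgn_one]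
  have h2 : sgn d n σ⁻¹ y = (sgn d n σ (σ⁻¹ y))⁻¹ := eq_inv_of_mul_eq_one_right h1
  rw [h2]
  rcases Int.units_eq_one_or (sgn d n σ (σ⁻¹ y)) with h | h <;> rw [h] <;> rfl

/-- for a fixed labeling of `T_{3,∞}` and `ℓ ≥ 2`, the set
`Q̃_{ℓ,∞}` of tree automorphisms `σ` such that
`sgn_ℓ(σ,y)·sgn_{ℓ-1}(σ,y) = sgn_ℓ(σ,x₀)·sgn_{ℓ-1}(σ,x₀)` for every node `y`
(where the root `x₀` has the empty label) is a subgroup of `Aut(T_{3,∞})`. -/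
theorem Qtilde_isSubgroup (ℓ : ℕ) (hℓ : 2 ≤ ℓ) :
    ∃ H : Subgroup (Equiv.Perm (List (Fin 3))),
      (H : Set (Equiv.Perm (List (Fin 3)))) =
        {σ | IsTreeAut 3 σ ∧ ∀ y : List (Fin 3),
          sgn 3 ℓ σ y * sgn 3 (ℓ - 1) σ y =
            sgn 3 ℓ σ [] * sgn 3 (ℓ - 1) σ []} := by
  refine ⟨{
    carrier := {σ | IsTreeAut 3 σ ∧ ∀ y : List (Fin 3),
      sgn 3 ℓ σ y * sgn 3 (ℓ - 1) σ y = sgn 3 ℓ σ [] * sgn 3 (ℓ - 1) σ []}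
    one_mem' := ⟨IsTreeAut.one, fun y => by rw [sgn_one, sgn_one, sgn_one, sgn_one]⟩
    mul_mem' := ?_
    inv_mem' := ?_ }, rfl⟩
  · rintro σ τ ⟨hσ, hσs⟩ ⟨hτ, hτs⟩
    refine ⟨hσ.mul hτ, fun y => ?_⟩
    rw [sgn_mul hσ hτ, sgn_mul hσ hτ, sgn_mul hσ hτ, sgn_mul hσ hτ, hτ.apply_nil,
      mul_mul_mul_comm, hσs (τ y), hτs y, mul_mul_mul_comm]
  · rintro σ ⟨hσ, hσs⟩
    refine ⟨hσ.inv, fun y => ?_⟩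
    rw [sgn_inv hσ, sgn_inv hσ, sgn_inv hσ, sgn_inv hσ, hσ.inv.apply_nil]
    exact hσs (σ⁻¹ y)

end Arboreal
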